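/- Let K be a field, r ≥ 2, and let R_{i,k} ∈ K for 0 ≤ i ≤ r+1 and k ∈ ℤ be nonzero elements with R_{0,k} = R_{r+1,k} = 1 satisfying the A_r Q-system R_{i,k+1}·R_{i,k−1} = R_{i,k}² + R_{i+1,k}·R_{i−1,k} for 1 ≤ i ≤ r and k ∈ ℤ. For a Motzkin path m define the explicit weights y_j(m) as in the context. Then for every mutation site 1 ≤ i ≤ r−1 satisfying case (i) (m_{i+1} = m_i + 1 and, when i ≥ 2, m_{i−1} = m_i) or case (ii) (m_{i+1} = m_i and, when i ≥ 2, m_{i−1} = m_i), and m' the Motzkin path with m'_j = m_j + δ_{j,i}, the explicit weights satisfy the mutation relations: y_{2i−1}(m') = y_{2i−1}(m) + y_{2i}(m); y_{2i}(m') = y_{2i+1}(m)·y_{2i}(m)/(y_{2i−1}(m) + y_{2i}(m)); y_{2i+1}(m') = y_{2i+1}(m)·y_{2i−1}(m)/(y_{2i−1}(m) + y_{2i}(m)); in case (ii) additionally y_{2i+2}(m') = y_{2i+2}(m)·y_{2i−1}(m)/(y_{2i−1}(m) + y_{2i}(m)); and y_j(m') = y_j(m) for all other indices j ∈ {1,…,2r+1}.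 -/

import Mathlib

namespace Stmt7

variable {K : Type*} [Field K]

/-- `c_{i,s} = R_{i,s}/R_{i,s-1}`. -/
def cQ (R : ℕ → ℤ → K) (i : ℕ) (s : ℤ) : K := R i s / R i (s - 1)

/-- `d_{i,s} = R_{i+1,s}·R_{i-1,s-1}/(R_{i,s}·R_{i,s-1})`. -/
def dQ (R : ℕ → ℤ → K) (i : ℕ) (s : ℤ) : K :=
  R (i + 1) s * R (i - 1) (s - 1) / (R i s * R i (s - 1))

/-- `L_{i,i+1}`: equal to `c_{i+1,m_{i+1}+1}/c_{i+1,m_i+1}` if `1 ≤ i+1 ≤ r` and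
`m_i = m_{i+1} + 1`, and `1` otherwise. -/
def Lup (r : ℕ) (R : ℕ → ℤ → K) (m : ℕ → ℤ) (i : ℕ) : K :=
  if i + 1 ≤ r ∧ m i = m (i + 1) + 1 then
    cQ R (i + 1) (m (i + 1) + 1) / cQ R (i + 1) (m i + 1)
  else 1

/-- `L_{i,i-1}`: equal to `c_{i-1,m_{i-1}+1}/c_{i-1,m_i+1}` if `1 ≤ i-1 ≤ r` and
`m_i = m_{i-1} - 1`, and `1` otherwise. -/
def Ldown (r : ℕ) (R : ℕ → ℤ → K) (m : ℕ → ℤ) (i : ℕ) : K :=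
  if 2 ≤ i ∧ i - 1 ≤ r ∧ m i = m (i - 1) - 1 then
    cQ R (i - 1) (m (i - 1) + 1) / cQ R (i - 1) (m i + 1)
  else 1

/-- The explicit weights `y_j(m)` of Theorem 2.11:
`y_{2i-1}(m) = c_{i,m_i+1}/c_{i-1,m_{i-1}+1}` and
`y_{2i}(m) = d_{i,m_i+1}·L_{i,i+1}·(L_{i,i-1})⁻¹`. -/
def yQ (r : ℕ) (R : ℕ → ℤ → K) (m : ℕ → ℤ) (j : ℕ) : K :=
  if j % 2 = 1 then
    cQ R ((j + 1) / 2) (m ((j + 1) / 2) + 1) /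
      cQ R ((j + 1) / 2 - 1) (m ((j + 1) / 2 - 1) + 1)
  else
    dQ R (j / 2) (m (j / 2) + 1) * Lup r R m (j / 2) * (Ldown r R m (j / 2))⁻¹

lemma cQ_ne (r : ℕ) (R : ℕ → ℤ → K) (hRnz : ∀ i : ℕ, ∀ k : ℤ, i ≤ r + 1 → R i k ≠ 0)
    (i : ℕ) (hi : i ≤ r + 1) (s : ℤ) : cQ R i s ≠ 0 :=
  div_ne_zero (hRnz i s hi) (hRnz i (s-1) hi)

lemma key (r : ℕ) (R : ℕ → ℤ → K) (hRnz : ∀ i : ℕ, ∀ k : ℤ, i ≤ r + 1 → R i k ≠ 0)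
    (hQ : ∀ i : ℕ, ∀ k : ℤ, 1 ≤ i → i ≤ r →
      R i (k + 1) * R i (k - 1) = R i k ^ 2 + R (i + 1) k * R (i - 1) k)
    (i : ℕ) (h1 : 1 ≤ i) (h2 : i ≤ r) (k : ℤ) :
    cQ R i (k + 1) = cQ R i k + dQ R i k * cQ R (i-1) k := by
  have e0 : R i k ≠ 0 := hRnz i k (by omega)
  have e1 : R i (k-1) ≠ 0 := hRnz i (k-1) (by omega)
  have e2 : R (i-1) (k-1) ≠ 0 := hRnz (i-1) (k-1) (by omega)
  unfold cQ dQ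
  rw [show k + 1 - 1 = k from by ring]
  field_simp
  linear_combination hQ i k h1 h2

lemma dstep (r : ℕ) (R : ℕ → ℤ → K) (hRnz : ∀ i : ℕ, ∀ k : ℤ, i ≤ r + 1 → R i k ≠ 0)
    (i : ℕ) (h1 : 1 ≤ i) (h2 : i ≤ r) (k : ℤ) :
    dQ R i (k + 1) =
      cQ R (i+1) (k+1) * dQ R i k * cQ R (i-1) k / (cQ R i k * cQ R i (k+1)) := by
  have e0 : R i k ≠ 0 := hRnz i k (by omega)
  have e1 : R i (k-1) ≠ 0 := hRnz i (k-1) (by omega)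
  have e2 : R (i-1) (k-1) ≠ 0 := hRnz (i-1) (k-1) (by omega)
  have e3 : R (i+1) k ≠ 0 := hRnz (i+1) k (by omega)
  have e4 : R i (k+1) ≠ 0 := hRnz i (k+1) (by omega)
  have e5 : R (i-1) k ≠ 0 := hRnz (i-1) k (by omega)
  have e6 : R (i+1) (k+1) ≠ 0 := hRnz (i+1) (k+1) (by omega)
  rw [eq_div_iff (mul_ne_zero (cQ_ne r R hRnz i (by omega) k) (cQ_ne r R hRnz i (by omega) (k+1)))]
  unfold cQ dQ
  rw [show k + 1 - 1 = k from by ring]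
  field_simp

lemma yQ_odd (r : ℕ) (R : ℕ → ℤ → K) (m : ℕ → ℤ) (i : ℕ) (hi : 1 ≤ i) :
    yQ r R m (2*i-1) = cQ R i (m i + 1) / cQ R (i-1) (m (i-1) + 1) := by
  have h1 : (2*i-1) % 2 = 1 := by omega
  have h2 : (2*i-1+1)/2 = i := by omega
  rw [yQ, if_pos h1, h2]

lemma yQ_even (r : ℕ) (R : ℕ → ℤ → K) (m : ℕ → ℤ) (i : ℕ) :
    yQ r R m (2*i) = dQ R i (m i + 1) * Lup r R m i * (Ldown r R m i)⁻¹ := by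
  have h1 : ¬ ((2*i) % 2 = 1) := by omega
  have h2 : (2*i)/2 = i := by omega
  rw [yQ, if_neg h1, h2]


/-- Theorem 2.11 of Di Francesco–Kedem: for a solution of the `A_r` `Q`-system, the
explicit weights `y_j(m)` satisfy the cluster-mutation relations under the mutation
`μ_i : m ↦ m'` in case (i) (`m_{i+1} = m_i + 1`) and case (ii) (`m_{i+1} = m_i`),
with `m_{i-1} = m_i` when `i ≥ 2`. -/
theorem stmt7 (r : ℕ) (hr : 2 ≤ r) (R : ℕ → ℤ → K)
    (hRnz : ∀ i : ℕ, ∀ k : ℤ, i ≤ r + 1 → R i k ≠ 0)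
    (hR0 : ∀ k : ℤ, R 0 k = 1) (hRr : ∀ k : ℤ, R (r + 1) k = 1)
    (hQ : ∀ i : ℕ, ∀ k : ℤ, 1 ≤ i → i ≤ r →
      R i (k + 1) * R i (k - 1) = R i k ^ 2 + R (i + 1) k * R (i - 1) k)
    (m : ℕ → ℤ) (hm : ∀ j, 1 ≤ j → j ≤ r - 1 → |m (j + 1) - m j| ≤ 1)
    (i : ℕ) (hi1 : 1 ≤ i) (hi2 : i ≤ r - 1)
    (hcase : (m (i + 1) = m i + 1 ∨ m (i + 1) = m i) ∧ (2 ≤ i → m (i - 1) = m i))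
    (m' : ℕ → ℤ) (hm' : m' = fun j => if j = i then m i + 1 else m j) :
    yQ r R m' (2 * i - 1) = yQ r R m (2 * i - 1) + yQ r R m (2 * i) ∧
    yQ r R m' (2 * i) =
      yQ r R m (2 * i + 1) * yQ r R m (2 * i) /
        (yQ r R m (2 * i - 1) + yQ r R m (2 * i)) ∧
    yQ r R m' (2 * i + 1) =
      yQ r R m (2 * i + 1) * yQ r R m (2 * i - 1) /
        (yQ r R m (2 * i - 1) + yQ r R m (2 * i)) ∧
    (m (i + 1) = m i →
      yQ r R m' (2 * i + 2) =
        yQ r R m (2 * i + 2) * yQ r R m (2 * i - 1) /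
          (yQ r R m (2 * i - 1) + yQ r R m (2 * i))) ∧
    (∀ j, 1 ≤ j → j ≤ 2 * r + 1 → j ≠ 2 * i - 1 → j ≠ 2 * i → j ≠ 2 * i + 1 →
      (m (i + 1) = m i → j ≠ 2 * i + 2) → yQ r R m' j = yQ r R m j) := by
  obtain ⟨hε, hdown⟩ := hcase
  have hm'i : m' i = m i + 1 := by rw [hm']; simp
  have hm'ne : ∀ j, j ≠ i → m' j = m j := fun j hj => by rw [hm']; simp [hj]
  have hc0 : cQ R (i-1) (m (i-1) + 1) = cQ R (i-1) (m i + 1) := by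
    rcases Nat.lt_or_ge i 2 with h | h
    · have hone : i = 1 := by omega
      subst hone
      simp [cQ, hR0]
    · rw [hdown h]
  -- nonzeroness
  have hA : cQ R i (m i + 1) ≠ 0 := cQ_ne r R hRnz i (by omega) _
  have hA' : cQ R i (m i + 1 + 1) ≠ 0 := cQ_ne r R hRnz i (by omega) _
  have hC : cQ R (i-1) (m i + 1) ≠ 0 := cQ_ne r R hRnz (i-1) (by omega) _
  have hB : cQ R (i+1) (m (i+1) + 1) ≠ 0 := cQ_ne r R hRnz (i+1) (by omega) _
  have hB2 : cQ R (i+1) (m i + 1 + 1) ≠ 0 := cQ_ne r R hRnz (i+1) (by omega) _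
  have hkey : cQ R i (m i + 1 + 1)
      = cQ R i (m i + 1) + dQ R i (m i + 1) * cQ R (i-1) (m i + 1) :=
    key r R hRnz hQ i hi1 (by omega) (m i + 1)
  have hds : dQ R i (m i + 1 + 1) =
      cQ R (i+1) (m i + 1 + 1) * dQ R i (m i + 1) * cQ R (i-1) (m i + 1) /
        (cQ R i (m i + 1) * cQ R i (m i + 1 + 1)) :=
    dstep r R hRnz i hi1 (by omega) (m i + 1)
  -- the old weights
  have Y1 : yQ r R m (2*i-1) = cQ R i (m i + 1) / cQ R (i-1) (m i + 1) := by
    rw [yQ_odd r R m i hi1, hc0]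
  have Y2 : yQ r R m (2*i) = dQ R i (m i + 1) := by
    have hL1 : ¬(i + 1 ≤ r ∧ m i = m (i+1) + 1) := by
      rintro ⟨-, h3⟩; rcases hε with h | h <;> omega
    have hL2 : ¬(2 ≤ i ∧ i - 1 ≤ r ∧ m i = m (i-1) - 1) := by
      rintro ⟨h2, -, h3⟩; have := hdown h2; omega
    rw [yQ_even, Lup, if_neg hL1, Ldown, if_neg hL2, mul_one, inv_one, mul_one]
  have Y3 : yQ r R m (2*i+1) = cQ R (i+1) (m (i+1) + 1) / cQ R i (m i + 1) := by
    rw [show 2*i+1 = 2*(i+1)-1 from by omega, yQ_odd r R m (i+1) (by omega)]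
    simp only [Nat.add_sub_cancel]
  -- the sum
  have hsum : yQ r R m (2*i-1) + yQ r R m (2*i) = cQ R i (m i + 1 + 1) / cQ R (i-1) (m i + 1) := by
    rw [Y1, Y2, hkey]
    field_simp
  -- the new weights
  have Y1' : yQ r R m' (2*i-1) = cQ R i (m i + 1 + 1) / cQ R (i-1) (m i + 1) := by
    rw [yQ_odd r R m' i hi1, hm'i, hm'ne (i-1) (by omega), hc0]
  have Y3' : yQ r R m' (2*i+1) = cQ R (i+1) (m (i+1) + 1) / cQ R i (m i + 1 + 1) := by
    rw [show 2*i+1 = 2*(i+1)-1 from by omega, yQ_odd r R m' (i+1) (by omega)]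
    simp only [Nat.add_sub_cancel]
    rw [hm'ne (i+1) (by omega), hm'i]
  have hLd' : Ldown r R m' i = 1 := by
    rw [Ldown, if_neg]
    rintro ⟨h2, -, h3⟩
    rw [hm'i, hm'ne (i-1) (by omega), hdown h2] at h3
    omega
  refine ⟨?_, ?_, ?_, ?_, ?_⟩
  · rw [hsum, Y1']
  · -- goal 2
    rw [hsum, Y3, Y2, yQ_even, hm'i, hLd', inv_one, mul_one]
    rcases hε with h | h
    · have hLu' : Lup r R m' i = 1 := by
        rw [Lup, if_neg]
        rintro ⟨-, h3⟩
        rw [hm'i, hm'ne (i+1) (by omega)] at h3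
        omega
      rw [hLu', mul_one, hds, h]
      field_simp
    · have hLu' : Lup r R m' i
          = cQ R (i+1) (m i + 1) / cQ R (i+1) (m i + 1 + 1) := by
        rw [Lup, if_pos]
        · rw [hm'i, hm'ne (i+1) (by omega), h]
        · rw [hm'i, hm'ne (i+1) (by omega), h]
          exact ⟨by omega, rfl⟩
      rw [hLu', hds, h]
      field_simp
  · -- goal 3
    rw [hsum, Y3', Y3, Y1]
    field_simp
  · -- goal 4
    intro hii
    rw [hsum, Y1]
    rw [show 2*i+2 = 2*(i+1) from by ring, yQ_even, yQ_even]
    have hLu : Lup r R m' (i+1) = Lup r R m (i+1) := by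
      rw [Lup, Lup, hm'ne (i+1) (by omega), hm'ne (i+2) (by omega)]
    have hLd : Ldown r R m (i+1) = 1 := by
      rw [Ldown, if_neg]
      simp only [Nat.add_sub_cancel]
      rintro ⟨-, -, h3⟩
      omega
    have hLd2 : Ldown r R m' (i+1)
        = cQ R i (m i + 1 + 1) / cQ R i (m i + 1) := by
      rw [Ldown]
      simp only [Nat.add_sub_cancel]
      rw [if_pos]
      · rw [hm'i, hm'ne (i+1) (by omega), hii]
      · refine ⟨by omega, by omega, ?_⟩
        rw [hm'i, hm'ne (i+1) (by omega), hii]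
        ring
    rw [hLu, hLd, hLd2, hm'ne (i+1) (by omega), inv_one, mul_one, inv_div]
    field_simp
  · -- goal 5 : unchanged weights
    intro j hj1 hj2 hj3 hj4 hj5 hj6
    rcases Nat.even_or_odd j with ⟨k, hk⟩ | ⟨k, hk⟩
    · -- even, j = 2k
      have hk1 : 1 ≤ k := by omega
      have hki : k ≠ i := by omega
      rw [show j = 2*k from by omega, yQ_even, yQ_even]
      have hLu : Lup r R m' k = Lup r R m k := by
        by_cases hk2 : k + 1 = i
        · have h2 : 2 ≤ i := by omega
          have e := hdown h2
          have eik : i - 1 = k := by omega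
          rw [eik] at e
          rw [Lup, Lup, if_neg, if_neg]
          · rintro ⟨-, h3⟩; rw [hk2] at h3; rcases hε with h | h <;> omega
          · rintro ⟨-, h3⟩
            rw [hm'ne k (by omega), hk2, hm'i] at h3
            omega
        · rw [Lup, Lup, hm'ne k hki, hm'ne (k+1) hk2]
      have hLd : Ldown r R m' k = Ldown r R m k := by
        by_cases hk2 : k - 1 = i
        · have hki2 : k = i + 1 := by omega
          have hε1 : m (i+1) = m i + 1 := by
            rcases hε with h | h
            · exact h
            · exact absurd (by omega : j = 2*i+2) (hj6 h)
          rw [Ldown, Ldown, if_neg, if_neg]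
          · rintro ⟨-, -, h3⟩; rw [hki2, Nat.add_sub_cancel] at h3; omega
          · rintro ⟨-, -, h3⟩
            rw [hki2, Nat.add_sub_cancel, hm'ne (i+1) (by omega), hm'i] at h3
            omega
        · rw [Ldown, Ldown, hm'ne k hki, hm'ne (k-1) hk2]
      rw [hLu, hLd, hm'ne k hki]
    · -- odd, j = 2k+1
      have hK1 : 1 ≤ k + 1 := by omega
      have hKi : k + 1 ≠ i := by omega
      have hki : k ≠ i := by omega
      rw [show j = 2*(k+1)-1 from by omega, yQ_odd r R m' (k+1) hK1,
        yQ_odd r R m (k+1) hK1]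
      simp only [Nat.add_sub_cancel]
      rw [hm'ne (k+1) hKi, hm'ne k hki]

end Stmt7
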